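/- arXiv:1502.01670 — 2 statements merged into one kernel-verified Lean document; each statement's English description precedes it below -/
import Mathlib

section
/- Let V = Z(f) be an irreducible two-dimensional surface in ℂ³ for which there exists a nonempty Zariski-open dense subset O ⊆ V such that every point of O is incident to a line fully contained in V. Then every point of V is incident to a line fully contained in V. -/
open MvPolynomial

namespace Stmt10

noncomputable section


abbrev R3 : Type := MvPolynomial (Fin 3) ℂ

/-- Expansion hom: `X i ↦ p i + v i * t`, where `p i = X (inl i)`, `v i = X (inr i)`. -/
def Φ : R3 →+* Polynomial (MvPolynomial (Fin 3 ⊕ Fin 3) ℂ) :=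
  eval₂Hom (Polynomial.C.comp C)
    (fun i => Polynomial.C (X (Sum.inl i)) + Polynomial.C (X (Sum.inr i)) * Polynomial.X)

lemma hom_eq (p v : Fin 3 → ℂ) (t : ℂ) :
    ((Polynomial.evalRingHom t).comp ((Polynomial.mapRingHom
        ((eval (Sum.elim p v)) : MvPolynomial (Fin 3 ⊕ Fin 3) ℂ →+* ℂ)).comp Φ))
      = (eval (p + t • v) : R3 →+* ℂ) := by
  apply MvPolynomial.ringHom_ext
  · intro a; simp [Φ]
  · intro i; simp [Φ]; ring

lemma eval_line (f : R3) (p v : Fin 3 → ℂ) (t : ℂ) :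
    eval (p + t • v) f
      = Polynomial.eval t (Polynomial.map (eval (Sum.elim p v)) (Φ f)) := by
  have := DFunLike.congr_fun (hom_eq p v t) f
  simpa using this.symm

/-- the coefficient of `t^N` in `f(p + t v)`, as polynomial in `v`. -/
def G (f : R3) (N : ℕ) (p : Fin 3 → ℂ) : R3 :=
  eval₂Hom C (Sum.elim (fun i => C (p i)) X) ((Φ f).coeff N)

lemma eval_G (f : R3) (N : ℕ) (p v : Fin 3 → ℂ) :
    eval v (G f N p) = eval (Sum.elim p v) ((Φ f).coeff N) := by
  have h : ((eval v : R3 →+* ℂ)).comp (eval₂Hom C (Sum.elim (fun i => C (p i)) X))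
      = (eval (Sum.elim p v) : MvPolynomial (Fin 3 ⊕ Fin 3) ℂ →+* ℂ) := by
    apply MvPolynomial.ringHom_ext
    · intro a; simp
    · intro i; cases i <;> simp
  exact DFunLike.congr_fun h ((Φ f).coeff N)

lemma line_iff (f : R3) (p v : Fin 3 → ℂ) :
    (∀ t : ℂ, eval (p + t • v) f = 0) ↔ ∀ N, eval v (G f N p) = 0 := by
  constructor
  · intro h N
    have hP : Polynomial.map (eval (Sum.elim p v)) (Φ f) = 0 := by
      apply Polynomial.funext; intro t
      rw [← eval_line f p v t, h t, Polynomial.eval_zero]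
    rw [eval_G, ← Polynomial.coeff_map, hP, Polynomial.coeff_zero]
  · intro h t
    rw [eval_line]
    have hP : Polynomial.map (eval (Sum.elim p v)) (Φ f) = 0 := by
      apply Polynomial.ext; intro N
      rw [Polynomial.coeff_map, ← eval_G f N p v, h N, Polynomial.coeff_zero]
    rw [hP, Polynomial.eval_zero]

def Ψ (p : Fin 3 → ℂ) : R3 →+* Polynomial R3 :=
  eval₂Hom (Polynomial.C.comp C)
    (fun i => Polynomial.C (C (p i)) + Polynomial.C (X i) * Polynomial.X)

lemma G_eq_Ψ (f : R3) (N : ℕ) (p : Fin 3 → ℂ) : G f N p = (Ψ p f).coeff N := by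
  have h : (Polynomial.mapRingHom (eval₂Hom C (Sum.elim (fun i => C (p i)) X) :
        MvPolynomial (Fin 3 ⊕ Fin 3) ℂ →+* R3)).comp Φ = Ψ p := by
    apply MvPolynomial.ringHom_ext
    · intro a; simp [Φ, Ψ]
    · intro i; simp [Φ, Ψ]
  rw [G, ← h]
  simp [Polynomial.coeff_map]

lemma G_isHomogeneous (f : R3) (N : ℕ) (p : Fin 3 → ℂ) :
    (G f N p).IsHomogeneous N := by
  rw [G_eq_Ψ]
  induction f using MvPolynomial.induction_on generalizing N with
  | C a =>
      have : Ψ p (C a) = Polynomial.C (C a) := by simp [Ψ]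
      rw [this, Polynomial.coeff_C]
      split_ifs with h
      · subst h; exact isHomogeneous_C _ _
      · exact isHomogeneous_zero _ _ _
  | add q r hq hr =>
      rw [map_add, Polynomial.coeff_add]
      exact (hq N).add (hr N)
  | mul_X q i hq =>
      have : Ψ p (q * X i)
          = Ψ p q * Polynomial.C (C (p i)) + (Ψ p q * Polynomial.C (X i)) * Polynomial.X := by
        rw [map_mul]
        have : Ψ p (X i) = Polynomial.C (C (p i)) + Polynomial.C (X i) * Polynomial.X := by
          simp [Ψ]
        rw [this]; ring
      rw [this, Polynomial.coeff_add, Polynomial.coeff_mul_C]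
      match N with
      | 0 =>
          rw [Polynomial.coeff_mul_X_zero]
          simpa using (hq 0).mul (isHomogeneous_C _ (p i))
      | (M + 1) =>
          rw [Polynomial.coeff_mul_X, Polynomial.coeff_mul_C]
          have h1 : ((Ψ p q).coeff (M+1) * C (p i)).IsHomogeneous (M+1) := by
            simpa using (hq (M+1)).mul (isHomogeneous_C _ (p i))
          have h2 : ((Ψ p q).coeff M * X i).IsHomogeneous (M+1) := by
            simpa using (hq M).mul (isHomogeneous_X _ i)
          exact h1.add h2

def Esw : MvPolynomial (Fin 3 ⊕ Fin 3) ℂ →+* MvPolynomial (Fin 3) R3 :=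
  (sumToIter ℂ (Fin 3) (Fin 3)).comp (rename Sum.swap).toRingHom

/-- coefficient-extraction polynomials: `CF f N κ` is a polynomial in `p` whose value
at `p` is the coefficient of `v^κ` in `G f N p`. -/
def CF (f : R3) (N : ℕ) (κ : Fin 3 →₀ ℕ) : R3 := coeff κ (Esw ((Φ f).coeff N))

lemma pe_eq (p : Fin 3 → ℂ) :
    ((map (eval p : R3 →+* ℂ)) :
        MvPolynomial (Fin 3) R3 →+* R3).comp Esw
      = eval₂Hom C (Sum.elim (fun i => C (p i)) X) := by
  apply MvPolynomial.ringHom_ext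
  · intro a; simp [Esw, sumToIter_C]
  · intro i; cases i <;> simp [Esw, sumToIter_Xl, sumToIter_Xr]

lemma coeff_G (f : R3) (N : ℕ) (p : Fin 3 → ℂ) (κ : Fin 3 →₀ ℕ) :
    coeff κ (G f N p) = eval p (CF f N κ) := by
  rw [G, ← pe_eq p]
  simp [CF, MvPolynomial.coeff_map]


section LA
open Matrix


variable {m n : Type*} [Fintype m] [Fintype n] [DecidableEq m] [DecidableEq n]

lemma surj_of_minor (A : Matrix m n ℂ) (g : m → n)
    (h : (A.submatrix id g).det ≠ 0) : Function.Surjective A.mulVec := by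
  intro w
  have hunit : IsUnit (A.submatrix id g) :=
    (Matrix.isUnit_iff_isUnit_det _).mpr (isUnit_iff_ne_zero.mpr h)
  obtain ⟨u, hu⟩ := Matrix.mulVec_surjective_iff_isUnit.mpr hunit w
  classical
  refine ⟨fun j => ∑ i ∈ Finset.univ.filter (fun i => g i = j), u i, ?_⟩
  funext r
  have : ∑ j, A r j * ∑ i ∈ Finset.univ.filter (fun i => g i = j), u i
      = ∑ i, A r (g i) * u i := by
    rw [← Finset.sum_fiberwise Finset.univ g (fun i => A r (g i) * u i)]
    apply Finset.sum_congr rfl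
    intro j _
    rw [Finset.mul_sum]
    apply Finset.sum_congr rfl
    intro i hi
    rw [Finset.mem_filter] at hi
    rw [hi.2]
  calc (A.mulVec _) r = ∑ j, A r j * ∑ i ∈ Finset.univ.filter (fun i => g i = j), u i := rfl
    _ = ∑ i, A r (g i) * u i := this
    _ = ((A.submatrix id g).mulVec u) r := rfl
    _ = w r := by rw [hu]

lemma minor_of_surj (A : Matrix m n ℂ) (h : Function.Surjective A.mulVec) :
    ∃ g : m → n, (A.submatrix id g).det ≠ 0 := by
  classical
  have hsurj : Function.Surjective A.mulVecLin := by
    simpa [Matrix.coe_mulVecLin] using h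
  have hsp : Submodule.span ℂ (Set.range Aᵀ) = ⊤ := by
    rw [show Set.range Aᵀ = Set.range A.col from rfl, ← Matrix.range_mulVecLin]
    exact LinearMap.range_eq_top.mpr hsurj
  obtain ⟨s, hs_sub, hs_span, hs_li⟩ := exists_linearIndependent ℂ (Set.range Aᵀ)
  rw [hsp] at hs_span
  have hfin : Fintype s := ((Set.finite_range Aᵀ).subset hs_sub).fintype
  let b : Module.Basis s ℂ (m → ℂ) := Module.Basis.mk hs_li (by rw [Subtype.range_coe, hs_span])
  have hcard : Fintype.card m = Fintype.card s := by
    rw [← Module.finrank_eq_card_basis b]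
    simp
  let ε : m ≃ s := Fintype.equivOfCardEq hcard
  have hchoice : ∀ x : s, ∃ j, Aᵀ j = (x : m → ℂ) := fun x => hs_sub x.2
  choose gj hgj using hchoice
  refine ⟨fun i => gj (ε i), ?_⟩
  have hli : LinearIndependent ℂ (fun i : m => ((ε i : s) : m → ℂ)) :=
    hs_li.comp ε ε.injective
  have hrange : Set.range (fun i : m => ((ε i : s) : m → ℂ)) = s := by
    rw [show (fun i : m => ((ε i : s) : m → ℂ)) = Subtype.val ∘ ε from rfl,
      Set.range_comp, Equiv.range_eq_univ, Set.image_univ, Subtype.range_coe]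
  have hsp2 : Submodule.span ℂ (Set.range (fun i : m => ((ε i : s) : m → ℂ))) = ⊤ := by
    rw [hrange, hs_span]
  have hunit : IsUnit ((Pi.basisFun ℂ m).det (fun i : m => ((ε i : s) : m → ℂ))) :=
    (Module.Basis.is_basis_iff_det _).mp ⟨hli, hsp2⟩
  have hmat : (Pi.basisFun ℂ m).toMatrix (fun i : m => ((ε i : s) : m → ℂ))
      = A.submatrix id (fun i => gj (ε i)) := by
    ext i j
    rw [Module.Basis.toMatrix_apply, Pi.basisFun_repr]
    have := hgj (ε j)
    calc ((ε j : s) : m → ℂ) i = Aᵀ (gj (ε j)) i := by rw [this]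
      _ = A i (gj (ε j)) := rfl
      _ = A.submatrix id (fun i => gj (ε i)) i j := rfl
  rw [Module.Basis.det_apply, hmat] at hunit
  exact hunit.ne_zero


end LA

def fs (a : Fin 3 → ℕ) : Fin 3 →₀ ℕ := Finsupp.equivFunOnFinite.symm a

lemma fs_apply (a : Fin 3 → ℕ) (i : Fin 3) : fs a i = a i := rfl

lemma fs_coe (κ : Fin 3 →₀ ℕ) : fs ⇑κ = κ := Finsupp.equivFunOnFinite.symm_apply_apply κ

lemma degree_fs (a : Fin 3 → ℕ) : (fs a).degree = ∑ i, a i := by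
  rw [Finsupp.degree]
  apply Finset.sum_subset (Finset.subset_univ _)
  intro i _ hi
  exact Finsupp.notMem_support_iff.mp hi

lemma degree_eq_sum (κ : Fin 3 →₀ ℕ) : κ.degree = ∑ i, κ i := by
  conv_lhs => rw [← fs_coe κ]
  exact degree_fs ⇑κ

lemma degree_add' (a b : Fin 3 →₀ ℕ) : (a + b).degree = a.degree + b.degree := by
  simp [degree_eq_sum, Finset.sum_add_distrib]

abbrev Rows (N : ℕ) := {d : Fin 3 → ℕ // d ∈ Finset.Nat.antidiagonalTuple 3 N}

abbrev Cols (N : ℕ) := Σ ik : {x : ℕ × ℕ // x ∈ Finset.HasAntidiagonal.antidiagonal N},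
    {e : Fin 3 → ℕ // e ∈ Finset.Nat.antidiagonalTuple 3 ik.1.2}

lemma rows_degree {N : ℕ} (d : Rows N) : (fs d.1).degree = N := by
  rw [degree_fs]; exact Finset.Nat.mem_antidiagonalTuple.mp d.2

/-- the scalar matrix whose surjectivity detects that all degree-`N` monomials in `v`
are combinations of the `G f i p` with homogeneous coefficients. -/
def Amat (f : R3) (N : ℕ) (p : Fin 3 → ℂ) : Matrix (Rows N) (Cols N) ℂ :=
  fun d c => coeff (fs d.1) (monomial (fs c.2.1) 1 * G f c.1.1.1 p)

lemma mulVec_eq_coeff (f : R3) (N : ℕ) (p : Fin 3 → ℂ) (u : Cols N → ℂ) (d : Rows N) :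
    (Amat f N p).mulVec u d
      = coeff (fs d.1) (∑ c : Cols N, u c • (monomial (fs c.2.1) 1 * G f c.1.1.1 p)) := by
  rw [MvPolynomial.coeff_sum]
  simp only [Matrix.mulVec, dotProduct, coeff_smul, smul_eq_mul, Amat]
  exact Finset.sum_congr rfl fun c _ => mul_comm _ _

/-- sum of the degree-`k` part of the monomials of `c`. -/
def hc (k : ℕ) (c : R3) : R3 :=
  ∑ e ∈ Finset.Nat.antidiagonalTuple 3 k, monomial (fs e) (coeff (fs e) c)

lemma hc_isHomogeneous (k : ℕ) (c : R3) : (hc k c).IsHomogeneous k :=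
  IsHomogeneous.sum _ _ _ fun e he => isHomogeneous_monomial _
    (by rw [degree_fs]; exact Finset.Nat.mem_antidiagonalTuple.mp he)

lemma coeff_hc (k : ℕ) (c : R3) (a : Fin 3 →₀ ℕ) :
    coeff a (hc k c) = if a.degree = k then coeff a c else 0 := by
  rw [hc, MvPolynomial.coeff_sum]
  split_ifs with h
  · rw [Finset.sum_eq_single (⇑a : Fin 3 → ℕ)]
    · rw [fs_coe, coeff_monomial, if_pos rfl]
    · intro e _ hne
      rw [coeff_monomial, if_neg]
      intro heq
      exact hne (by rw [← heq]; rfl)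
    · intro hnm
      exfalso
      exact hnm (Finset.Nat.mem_antidiagonalTuple.mpr (by rw [← degree_eq_sum]; exact h))
  · apply Finset.sum_eq_zero
    intro e he
    rw [coeff_monomial, if_neg]
    intro heq
    apply h
    rw [← heq, degree_fs]
    exact Finset.Nat.mem_antidiagonalTuple.mp he
  
lemma coeff_mul_collapse {i k N : ℕ} (hik : i + k = N) (c h : R3) (hh : h.IsHomogeneous i)
    {d : Fin 3 →₀ ℕ} (hd : d.degree = N) :
    coeff d (c * h) = coeff d (hc k c * h) := by
  rw [coeff_mul, coeff_mul]
  apply Finset.sum_congr rfl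
  rintro ⟨a, b⟩ hab
  rw [Finset.HasAntidiagonal.mem_antidiagonal] at hab
  by_cases hb : coeff b h = 0
  · simp [hb]
  · have hbd : b.degree = i := by
      by_contra hne; exact hb (hh.coeff_eq_zero hne)
    have had : a.degree = k := by
      have h2 : a.degree + b.degree = N := by rw [← degree_add', hab, hd]
      omega
    rw [coeff_hc, if_pos had]

lemma coeff_mul_big {i N : ℕ} (hiN : N < i) (c h : R3) (hh : h.IsHomogeneous i)
    {d : Fin 3 →₀ ℕ} (hd : d.degree = N) :
    coeff d (c * h) = 0 := by
  rw [coeff_mul]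
  apply Finset.sum_eq_zero
  rintro ⟨a, b⟩ hab
  rw [Finset.HasAntidiagonal.mem_antidiagonal] at hab
  by_cases hb : coeff b h = 0
  · simp [hb]
  · exfalso
    have hbd : b.degree = i := by
      by_contra hne; exact hb (hh.coeff_eq_zero hne)
    have h2 : a.degree + b.degree = N := by rw [← degree_add', hab, hd]
    omega

lemma hc_zero (k : ℕ) : hc k 0 = 0 := by
  apply Finset.sum_eq_zero; intro e _; rw [coeff_zero, monomial_zero]

/-- If there is a nontrivial direction `v` killing all `G f i p`, then no `Amat` is
surjective. -/
lemma not_surjective (f : R3) (p v : Fin 3 → ℂ) (hv : v ≠ 0)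
    (h0 : ∀ N, eval v (G f N p) = 0) (N : ℕ) :
    ¬ Function.Surjective (Amat f N p).mulVec := by
  intro hs
  obtain ⟨j, hj⟩ : ∃ j, v j ≠ 0 := by
    by_contra hc; push_neg at hc; exact hv (funext hc)
  set dN : Fin 3 → ℕ := ⇑(Finsupp.single j N) with hdN
  have hdmem : dN ∈ Finset.Nat.antidiagonalTuple 3 N := by
    rw [Finset.Nat.mem_antidiagonalTuple, hdN]
    simp [Finsupp.single_apply]
  obtain ⟨u, hu⟩ := hs (Pi.single (⟨dN, hdmem⟩ : Rows N) 1)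
  set H : R3 := ∑ c : Cols N, u c • (monomial (fs c.2.1) 1 * G f c.1.1.1 p) with hH
  have hHcoeff : ∀ d : Rows N, coeff (fs d.1) H
      = (Pi.single (⟨dN, hdmem⟩ : Rows N) (1:ℂ) : Rows N → ℂ) d := by
    intro d
    rw [← mulVec_eq_coeff, hu]
  have hHhom : H.IsHomogeneous N := by
    apply IsHomogeneous.sum
    intro c _
    rw [smul_eq_C_mul]
    have h1 : (monomial (fs c.2.1) (1:ℂ) * G f c.1.1.1 p).IsHomogeneous (c.1.1.2 + c.1.1.1) :=
      (isHomogeneous_monomial 1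
        (by rw [degree_fs]; exact Finset.Nat.mem_antidiagonalTuple.mp c.2.2)).mul
        (G_isHomogeneous f c.1.1.1 p)
    have h2 : c.1.1.2 + c.1.1.1 = N := by
      have := Finset.HasAntidiagonal.mem_antidiagonal.mp c.1.2; omega
    have h3 : ((C (u c) : R3) * (monomial (fs c.2.1) 1 * G f c.1.1.1 p)).IsHomogeneous
        (0 + (c.1.1.2 + c.1.1.1)) := (isHomogeneous_C (Fin 3) (u c)).mul h1
    simpa [h2] using h3
  have hsingle : fs dN = Finsupp.single j N := fs_coe _
  have hHeq : H = monomial (Finsupp.single j N) 1 := by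
    apply MvPolynomial.ext
    intro κ
    by_cases hκ : κ.degree = N
    · have hmem : ⇑κ ∈ Finset.Nat.antidiagonalTuple 3 N :=
        Finset.Nat.mem_antidiagonalTuple.mpr (by rw [← degree_eq_sum]; exact hκ)
      have hco := hHcoeff ⟨⇑κ, hmem⟩
      rw [fs_coe] at hco
      rw [hco, coeff_monomial]
      by_cases hkd : κ = Finsupp.single j N
      · have hrow : (⟨⇑κ, hmem⟩ : Rows N) = ⟨dN, hdmem⟩ :=
          Subtype.ext (show ⇑κ = dN by rw [hkd, hdN])
        rw [hrow, Pi.single_eq_same, if_pos hkd.symm]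
      · have hrow : (⟨⇑κ, hmem⟩ : Rows N) ≠ ⟨dN, hdmem⟩ := by
          intro hcontra
          apply hkd
          have hco2 : ⇑κ = dN := congrArg Subtype.val hcontra
          exact DFunLike.coe_injective hco2
        rw [Pi.single_eq_of_ne hrow, if_neg (fun h => hkd h.symm)]
    · rw [hHhom.coeff_eq_zero hκ, coeff_monomial, if_neg]
      intro heq
      apply hκ
      rw [← heq]
      simp [degree_eq_sum, Finsupp.single_apply]
  have h1 : eval v H = 0 := by
    rw [hH, map_sum]
    apply Finset.sum_eq_zero
    intro c _
    rw [smul_eq_C_mul, map_mul, map_mul, eval_C, h0, mul_zero, mul_zero]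
  rw [hHeq] at h1
  rw [← X_pow_eq_monomial, map_pow, eval_X] at h1
  exact pow_ne_zero N hj h1

lemma hit_single (f : R3) (p : Fin 3 → ℂ) {N : ℕ} (mj : Fin 3 → ℕ)
    (hmj : ∀ j, (X j : R3) ^ mj j ∈ Ideal.span (Set.range fun i => G f i p))
    (hN : mj 0 + mj 1 + mj 2 < N) (d : Rows N) :
    ∃ u, (Amat f N p).mulVec u = (Pi.single d (1:ℂ) : Rows N → ℂ) := by
  classical
  obtain ⟨j, hj⟩ : ∃ j : Fin 3, mj j ≤ d.1 j := by
    by_contra hcon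
    push_neg at hcon
    have hsum : ∑ i, d.1 i = N := Finset.Nat.mem_antidiagonalTuple.mp d.2
    have h3 : ∑ i, d.1 i = d.1 0 + d.1 1 + d.1 2 := by rw [Fin.sum_univ_three]
    have c0 := hcon 0; have c1 := hcon 1; have c2 := hcon 2
    omega
  obtain ⟨cf, hcf⟩ := Finsupp.mem_ideal_span_range_iff_exists_finsupp.mp (hmj j)
  set μ : Fin 3 →₀ ℕ := fs d.1 - Finsupp.single j (mj j) with hμ
  have hμadd : μ + Finsupp.single j (mj j) = fs d.1 := by
    ext i
    rw [Finsupp.add_apply, hμ, Finsupp.tsub_apply]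
    rcases eq_or_ne i j with rfl | hne
    · rw [Finsupp.single_eq_same]
      have hfd : fs d.1 i = d.1 i := rfl
      omega
    · rw [Finsupp.single_eq_of_ne hne]
      omega
  set b : ℕ → R3 := fun i => monomial μ 1 * cf i with hb
  have hrep : monomial (fs d.1) (1:ℂ) = ∑ i ∈ cf.support, b i * G f i p := by
    have hXp : monomial μ (1:ℂ) * (X j : R3) ^ (mj j) = monomial (fs d.1) 1 := by
      rw [X_pow_eq_monomial, monomial_mul, hμadd, one_mul]
    rw [← hXp, ← hcf, Finsupp.sum, Finset.mul_sum]
    apply Finset.sum_congr rfl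
    intro i _
    show (monomial μ) 1 * (cf i * G f i p) = (monomial μ) 1 * cf i * G f i p
    rw [mul_assoc]
  refine ⟨fun c => coeff (fs c.2.1) (b c.1.1.1), ?_⟩
  funext d'
  rw [mulVec_eq_coeff]
  have hd'deg : (fs d'.1).degree = N := rows_degree d'
  have hsig : ∑ c : Cols N,
        (coeff (fs c.2.1) (b c.1.1.1)) • (monomial (fs c.2.1) (1:ℂ) * G f c.1.1.1 p)
      = ∑ ik ∈ Finset.HasAntidiagonal.antidiagonal N, hc ik.2 (b ik.1) * G f ik.1 p := by
    rw [← Finset.univ_sigma_univ, Finset.sum_sigma,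
      ← Finset.sum_coe_sort (Finset.HasAntidiagonal.antidiagonal N)
        (fun ik => hc ik.2 (b ik.1) * G f ik.1 p)]
    apply Finset.sum_congr rfl
    intro ik _
    rw [hc, Finset.sum_mul,
      ← Finset.sum_coe_sort (Finset.Nat.antidiagonalTuple 3 ik.1.2)
        (fun e => monomial (fs e) (coeff (fs e) (b ik.1.1)) * G f ik.1.1 p)]
    apply Finset.sum_congr rfl
    intro e _
    show coeff (fs e.1) (b ik.1.1) • ((monomial (fs e.1)) (1:ℂ) * G f ik.1.1 p)
      = (monomial (fs e.1)) (coeff (fs e.1) (b ik.1.1)) * G f ik.1.1 p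
    rw [← smul_mul_assoc]
    congr 1
    rw [smul_monomial, smul_eq_mul, mul_one]
  rw [hsig, Finset.Nat.sum_antidiagonal_eq_sum_range_succ_mk, MvPolynomial.coeff_sum]
  have hval : coeff (fs d'.1) (monomial (fs d.1) (1:ℂ))
      = (Pi.single d (1:ℂ) : Rows N → ℂ) d' := by
    rw [coeff_monomial]
    by_cases hdd : d' = d
    · rw [if_pos (by rw [hdd]), hdd, Pi.single_eq_same]
    · rw [if_neg, Pi.single_eq_of_ne hdd]
      intro heq
      apply hdd
      apply Subtype.ext
      have h2 : d.1 = d'.1 := by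
        have := Finsupp.equivFunOnFinite.symm.injective heq
        exact this
      rw [h2]
  rw [← hval, hrep, MvPolynomial.coeff_sum]
  have hL : ∑ i ∈ Finset.range (N+1), coeff (fs d'.1) (hc (N - i) (b i) * G f i p)
      = ∑ i ∈ Finset.range (N+1) ∩ cf.support,
          coeff (fs d'.1) (hc (N - i) (b i) * G f i p) := by
    apply (Finset.sum_subset Finset.inter_subset_left ?_).symm
    intro i hi hni
    have hcfi : cf i = 0 := by
      by_contra hcc
      exact hni (Finset.mem_inter.mpr ⟨hi, Finsupp.mem_support_iff.mpr hcc⟩)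
    simp [hb, hcfi, hc_zero]
  have hR : ∑ i ∈ cf.support, coeff (fs d'.1) (b i * G f i p)
      = ∑ i ∈ Finset.range (N+1) ∩ cf.support, coeff (fs d'.1) (b i * G f i p) := by
    apply (Finset.sum_subset Finset.inter_subset_right ?_).symm
    intro i hi hni
    have hiN : N < i := by
      have hnr : i ∉ Finset.range (N+1) := fun hr => hni (Finset.mem_inter.mpr ⟨hr, hi⟩)
      rw [Finset.mem_range] at hnr
      omega
    exact coeff_mul_big hiN _ _ (G_isHomogeneous f i p) hd'deg
  rw [hL, hR]
  apply Finset.sum_congr rfl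
  intro i hi
  have hiN : i ≤ N := by
    have := (Finset.mem_inter.mp hi).1
    rw [Finset.mem_range] at this
    omega
  exact (coeff_mul_collapse (by omega : i + (N - i) = N) _ _
    (G_isHomogeneous f i p) hd'deg).symm

lemma exists_surjective (f : R3) (p : Fin 3 → ℂ)
    (hm : ∀ j : Fin 3, ∃ m, (X j : R3) ^ m ∈ Ideal.span (Set.range fun i => G f i p)) :
    ∃ N, Function.Surjective (Amat f N p).mulVec := by
  classical
  choose mj hmj using hm
  refine ⟨mj 0 + mj 1 + mj 2 + 1, ?_⟩
  have key := hit_single f p mj hmj (by omega : mj 0 + mj 1 + mj 2 < mj 0 + mj 1 + mj 2 + 1)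
  choose uu huu using key
  intro w
  refine ⟨fun c => ∑ d, w d * uu d c, ?_⟩
  funext r
  have hlin : (Amat f (mj 0 + mj 1 + mj 2 + 1) p).mulVec (fun c => ∑ d, w d * uu d c) r
      = ∑ d, w d * ((Amat f (mj 0 + mj 1 + mj 2 + 1) p).mulVec (uu d) r) := by
    simp only [Matrix.mulVec, dotProduct, Finset.mul_sum]
    rw [Finset.sum_comm]
    apply Finset.sum_congr rfl
    intro d _
    apply Finset.sum_congr rfl
    intro c _
    ring
  rw [hlin]
  simp only [huu]
  rw [Finset.sum_eq_single r]
  · rw [Pi.single_eq_same, mul_one]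
  · intro d _ hdr
    rw [Pi.single_eq_of_ne (Ne.symm hdr), mul_zero]
  · intro hr
    exact absurd (Finset.mem_univ r) hr

def Apoly (f : R3) (N : ℕ) : Matrix (Rows N) (Cols N) R3 :=
  fun d c => if ∀ i, c.2.1 i ≤ d.1 i then CF f c.1.1.1 (fs d.1 - fs c.2.1) else 0

lemma map_Apoly (f : R3) (N : ℕ) (p : Fin 3 → ℂ) :
    (Apoly f N).map (eval p) = Amat f N p := by
  ext d c
  rw [Matrix.map_apply]
  show eval p (Apoly f N d c) = Amat f N p d c
  rw [Apoly, Amat]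
  show eval p (if ∀ i, c.2.1 i ≤ d.1 i then CF f c.1.1.1 (fs d.1 - fs c.2.1) else 0)
    = coeff (fs d.1) (monomial (fs c.2.1) 1 * G f c.1.1.1 p)
  rw [mul_comm, coeff_mul_monomial']
  have hiff : fs c.2.1 ≤ fs d.1 ↔ ∀ i, c.2.1 i ≤ d.1 i := by
    constructor
    · intro h i; exact h i
    · intro h i; exact h i
  by_cases hcd : ∀ i, c.2.1 i ≤ d.1 i
  · rw [if_pos hcd, if_pos (hiff.mpr hcd), mul_one, ← coeff_G]
  · rw [if_neg hcd, if_neg (fun h => hcd (hiff.mp h)), map_zero]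




lemma transfer (f g0 h : R3) (hf : Irreducible f) (q0 : Fin 3 → ℂ) (hq0 : eval q0 f = 0)
    (hg0 : eval q0 g0 ≠ 0)
    (hvan : ∀ x, eval x f = 0 → eval x g0 ≠ 0 → eval x h = 0) :
    ∀ x, eval x f = 0 → eval x h = 0 := by
  have hmem : h * g0 ∈ vanishingIdeal ℂ (zeroLocus ℂ (Ideal.span {f})) := by
    rw [mem_vanishingIdeal_iff]
    intro x hx
    change eval x (h * g0) = 0
    have hxf : eval x f = 0 := hx f (Ideal.subset_span (Set.mem_singleton f))
    rw [map_mul]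
    by_cases hgx : eval x g0 = 0
    · rw [hgx, mul_zero]
    · rw [hvan x hxf hgx, zero_mul]
  rw [vanishingIdeal_zeroLocus_eq_radical] at hmem
  obtain ⟨n, hn⟩ := Ideal.mem_radical_iff.mp hmem
  rw [mul_pow] at hn
  rw [Ideal.mem_span_singleton] at hn
  have hprime : Prime f := UniqueFactorizationMonoid.irreducible_iff_prime.mp hf
  have hdvd : f ∣ h * g0 := hprime.dvd_of_dvd_pow (by rwa [← mul_pow] at hn)
  rcases hprime.2.2 h g0 hdvd with hfh | hfg
  · intro x hx
    obtain ⟨c, rfl⟩ := hfh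
    rw [map_mul, hx, zero_mul]
  · exfalso
    obtain ⟨c, rfl⟩ := hfg
    rw [map_mul, hq0, zero_mul] at hg0
    exact hg0 rfl

lemma exists_pow_mem (f : R3) (p : Fin 3 → ℂ)
    (hnov : ∀ v : Fin 3 → ℂ, (∀ N, eval v (G f N p) = 0) → v = 0) (j : Fin 3) :
    ∃ m : ℕ, (X j : R3) ^ m ∈ Ideal.span (Set.range fun i => G f i p) := by
  have hXj : (X j : R3) ∈ vanishingIdeal ℂ
      (zeroLocus ℂ (Ideal.span (Set.range fun i => G f i p))) := by
    rw [mem_vanishingIdeal_iff]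
    intro x hx
    have hx0 : x = 0 := hnov x (fun N => hx _ (Ideal.subset_span ⟨N, rfl⟩))
    change eval x (X j) = 0
    rw [hx0, eval_X]
    rfl
  rw [vanishingIdeal_zeroLocus_eq_radical] at hXj
  exact Ideal.mem_radical_iff.mp hXj

end
end Stmt10

open MvPolynomial

/-- If an irreducible surface `V = Z(f) ⊂ ℂ³` has a nonempty Zariski-open
subset (the complement in `V` of a Zariski-closed set `C`) all of whose points
lie on lines fully contained in `V`, then every point of `V` lies on a line
fully contained in `V`. -/
theorem stmt_10 (f : MvPolynomial (Fin 3) ℂ) (hf : Irreducible f)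
    (hdeg : 0 < f.totalDegree)
    (V : Set (Fin 3 → ℂ)) (hV : V = {p | eval p f = 0})
    (C : Set (Fin 3 → ℂ))
    (hC : ∃ S : Set (MvPolynomial (Fin 3) ℂ),
      C = {p | ∀ g ∈ S, eval p g = 0})
    (hne : (V \ C).Nonempty)
    (hlines : ∀ p ∈ V \ C, ∃ v : Fin 3 → ℂ, v ≠ 0 ∧
      ∀ t : ℂ, eval (p + t • v) f = 0) :
    ∀ p ∈ V, ∃ v : Fin 3 → ℂ, v ≠ 0 ∧ ∀ t : ℂ, eval (p + t • v) f = 0 := by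
  classical
  obtain ⟨S, hS⟩ := hC
  intro p hp
  have hpf : eval p f = 0 := by rw [hV] at hp; exact hp
  by_contra hcon
  push_neg at hcon
  have hnov : ∀ v : Fin 3 → ℂ, (∀ N, eval v (Stmt10.G f N p) = 0) → v = 0 := by
    intro v hvG
    by_contra hvne
    obtain ⟨t, ht⟩ := hcon v hvne
    exact ht (((Stmt10.line_iff f p v).mpr hvG) t)
  have hms := Stmt10.exists_pow_mem f p hnov
  obtain ⟨N, hNsurj⟩ := Stmt10.exists_surjective f p hms
  obtain ⟨g, hg⟩ := Stmt10.minor_of_surj _ hNsurj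
  obtain ⟨q0, hq0⟩ := hne
  have hq0V : eval q0 f = 0 := by
    have := hq0.1
    rw [hV] at this
    exact this
  obtain ⟨g0, hg0S, hg0⟩ : ∃ g0 ∈ S, eval q0 g0 ≠ 0 := by
    have h2 := hq0.2
    rw [hS] at h2
    simp only [Set.mem_setOf_eq] at h2
    push_neg at h2
    exact h2
  set hpoly : Stmt10.R3 := ((Stmt10.Apoly f N).submatrix id g).det with hhp
  have hvan : ∀ x, eval x f = 0 → eval x g0 ≠ 0 → eval x hpoly = 0 := by
    intro x hxf hxg
    have hxVC : x ∈ V \ C := by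
      constructor
      · rw [hV]; exact hxf
      · rw [hS]; intro hall; exact hxg (hall g0 hg0S)
    obtain ⟨v, hvne, hlin⟩ := hlines x hxVC
    have hvG : ∀ M, eval v (Stmt10.G f M x) = 0 := (Stmt10.line_iff f x v).mp hlin
    by_contra hdet
    have hdet2 : (((Stmt10.Apoly f N).submatrix id g).map (eval x)).det ≠ 0 := by
      intro h0
      apply hdet
      rw [hhp, RingHom.map_det, RingHom.mapMatrix_apply]
      exact h0
    rw [← Matrix.submatrix_map, Stmt10.map_Apoly] at hdet2
    exact Stmt10.not_surjective f x v hvne hvG N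
      (Stmt10.surj_of_minor _ g hdet2)
  have hvp : eval p hpoly = 0 :=
    Stmt10.transfer f g0 hpoly hf q0 hq0V hg0 hvan p hpf
  apply hg
  have hdet3 : ((Stmt10.Amat f N p).submatrix id g).det = eval p hpoly := by
    rw [hhp, RingHom.map_det, RingHom.mapMatrix_apply, ← Matrix.submatrix_map,
      Stmt10.map_Apoly]
  rw [hdet3, hvp]
end

section
/- Let V be an irreducible algebraic surface in ℂ³ that is a cone: there is a point a ∈ V such that for every p ∈ V, the line through a and p is fully contained in V. Then V has at most one such apex a, unless V is a plane. -/
open MvPolynomial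

noncomputable def lin (c : Fin 3 → ℂ) (e : ℂ) : MvPolynomial (Fin 3) ℂ :=
  (∑ i, C (c i) * X i) + C e

lemma eval_lin (c : Fin 3 → ℂ) (e : ℂ) (x : Fin 3 → ℂ) :
    eval x (lin c e) = (∑ i, c i * x i) + e := by
  simp [lin]

lemma prime_X3 (j : Fin 3) : Prime (X j : MvPolynomial (Fin 3) ℂ) := by
  have h0 : Prime (X 0 : MvPolynomial (Fin 3) ℂ) := by
    have h := MulEquiv.prime_iff (MvPolynomial.finSuccEquiv ℂ 2).toRingEquiv.toMulEquiv
      (p := (X 0 : MvPolynomial (Fin 3) ℂ)) |>.symm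
    rw [h]
    simpa [finSuccEquiv_X_zero] using
      (Polynomial.prime_X (R := MvPolynomial (Fin 2) ℂ))
  have h := MulEquiv.prime_iff (renameEquiv ℂ (Equiv.swap (0 : Fin 3) j)).toRingEquiv.toMulEquiv
      (p := (X 0 : MvPolynomial (Fin 3) ℂ)) |>.symm
  rw [h] at h0
  simpa [renameEquiv, Equiv.swap_apply_left] using h0

lemma prime_lin {c : Fin 3 → ℂ} (hc : c ≠ 0) (e : ℂ) : Prime (lin c e) := by
  obtain ⟨j, hj⟩ : ∃ j, c j ≠ 0 := Function.ne_iff.mp hc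
  set u : Fin 3 → MvPolynomial (Fin 3) ℂ := fun i => if i = j then lin c e else X i with hu
  set v : Fin 3 → MvPolynomial (Fin 3) ℂ := fun i => if i = j then
      C (c j)⁻¹ * (X j - C e - ∑ i' ∈ Finset.univ.erase j, C (c i') * X i') else X i with hv
  have hsum : (∑ i, C (c i) * X i : MvPolynomial (Fin 3) ℂ)
      = C (c j) * X j + ∑ i ∈ Finset.univ.erase j, C (c i) * X i :=
    (Finset.add_sum_erase _ _ (Finset.mem_univ j)).symm
  have huj : u j = lin c e := by simp [hu]
  have hvj : v j = C (c j)⁻¹ *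
      (X j - C e - ∑ i' ∈ Finset.univ.erase j, C (c i') * X i') := by simp [hv]
  have hune : ∀ i, i ≠ j → u i = X i := fun i hi => by simp [hu, hi]
  have hvne : ∀ i, i ≠ j → v i = X i := fun i hi => by simp [hv, hi]
  have hSu : (aeval u) (∑ i' ∈ Finset.univ.erase j, C (c i') * X i')
      = ∑ i' ∈ Finset.univ.erase j, C (c i') * X i' := by
    rw [map_sum]
    refine Finset.sum_congr rfl fun i' hi' => ?_
    rw [map_mul, aeval_C, aeval_X, hune i' (Finset.mem_erase.mp hi').1]
    rfl
  have hSv : (aeval v) (∑ i' ∈ Finset.univ.erase j, C (c i') * X i')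
      = ∑ i' ∈ Finset.univ.erase j, C (c i') * X i' := by
    rw [map_sum]
    refine Finset.sum_congr rfl fun i' hi' => ?_
    rw [map_mul, aeval_C, aeval_X, hvne i' (Finset.mem_erase.mp hi').1]
    rfl
  have hFG : (aeval u).comp (aeval v) = AlgHom.id ℂ (MvPolynomial (Fin 3) ℂ) := by
    apply MvPolynomial.algHom_ext; intro i
    by_cases h : i = j
    · rw [AlgHom.comp_apply, aeval_X, AlgHom.id_apply, h, hvj, map_mul, map_sub, map_sub,
        aeval_C, aeval_X, huj, hSu, lin]
      simp only [aeval_C, algebraMap_eq]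
      have : (∑ i, C (c i) * X i : MvPolynomial (Fin 3) ℂ) + C e - C e
          - ∑ i' ∈ Finset.univ.erase j, C (c i') * X i' = C (c j) * X j := by
        rw [hsum]; ring
      rw [this, ← mul_assoc, ← map_mul, inv_mul_cancel₀ hj, map_one, one_mul]
    · rw [AlgHom.comp_apply, aeval_X, AlgHom.id_apply, hvne i h, aeval_X, hune i h]
  have hGF : (aeval v).comp (aeval u) = AlgHom.id ℂ (MvPolynomial (Fin 3) ℂ) := by
    apply MvPolynomial.algHom_ext; intro i
    by_cases h : i = j
    · rw [AlgHom.comp_apply, aeval_X, AlgHom.id_apply, h, huj, lin, map_add, map_sum]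
      have : ∀ i' ∈ (Finset.univ : Finset (Fin 3)),
          (aeval v) (C (c i') * X i') = C (c i') * v i' := by
        intro i' _
        rw [map_mul, aeval_C, aeval_X]; rfl
      rw [Finset.sum_congr rfl this, ← Finset.add_sum_erase _ _ (Finset.mem_univ j)]
      have herase : ∑ i' ∈ Finset.univ.erase j, C (c i') * v i'
          = ∑ i' ∈ Finset.univ.erase j, C (c i') * X i' :=
        Finset.sum_congr rfl fun i' hi' => by rw [hvne i' (Finset.mem_erase.mp hi').1]
      rw [herase, hvj, ← mul_assoc, ← map_mul, mul_inv_cancel₀ hj, map_one, one_mul]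
      simp only [aeval_C, algebraMap_eq]
      ring
    · rw [AlgHom.comp_apply, aeval_X, AlgHom.id_apply, hune i h, aeval_X, hvne i h]
  let ψ : MvPolynomial (Fin 3) ℂ ≃ₐ[ℂ] MvPolynomial (Fin 3) ℂ :=
    AlgEquiv.ofAlgHom (aeval u) (aeval v) hFG hGF
  have hψ : ψ (X j) = lin c e := by
    show (aeval u) (X j) = lin c e
    rw [aeval_X, huj]
  have := (MulEquiv.prime_iff ψ.toRingEquiv.toMulEquiv (p := (X j : MvPolynomial (Fin 3) ℂ))).mpr
    (prime_X3 j)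
  rwa [show (ψ.toRingEquiv.toMulEquiv (X j) = lin c e) from hψ] at this

lemma dvd_of_zero_imp {g h : MvPolynomial (Fin 3) ℂ} (hg : Prime g)
    (hsub : ∀ x, eval x g = 0 → eval x h = 0) : g ∣ h := by
  have hmem : h ∈ vanishingIdeal ℂ (zeroLocus ℂ (Ideal.span {g})) := by
    intro x hx
    exact hsub x (hx g (Ideal.subset_span rfl))
  rw [vanishingIdeal_zeroLocus_eq_radical] at hmem
  have hp : (Ideal.span {g}).IsPrime := (Ideal.span_singleton_prime hg.ne_zero).mpr hg
  rw [hp.radical] at hmem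
  exact Ideal.mem_span_singleton.mp hmem

open Matrix in
lemma mem_span_of_dot_eq_zero {d w : Fin 3 → ℂ} (hli : LinearIndependent ℂ ![d, w])
    {y : Fin 3 → ℂ} (hy : ∑ i, (crossProduct d w) i * y i = 0) :
    ∃ α β : ℂ, y = α • d + β • w := by
  set c : Fin 3 → ℂ := crossProduct d w with hcdef
  have hc : c ≠ 0 := crossProduct_ne_zero_iff_linearIndependent.mpr hli
  let φ : (Fin 3 → ℂ) →ₗ[ℂ] ℂ :=
    { toFun := fun z => c ⬝ᵥ z
      map_add' := fun z₁ z₂ => dotProduct_add c z₁ z₂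
      map_smul' := fun m z => by simp [dotProduct_smul] }
  obtain ⟨j, hj⟩ : ∃ j, c j ≠ 0 := Function.ne_iff.mp hc
  have hsurj : Function.Surjective φ := by
    intro z
    refine ⟨(z * (c j)⁻¹) • (Pi.single j 1 : Fin 3 → ℂ), ?_⟩
    show c ⬝ᵥ ((z * (c j)⁻¹) • (Pi.single j 1 : Fin 3 → ℂ)) = z
    rw [dotProduct_smul, dotProduct_single]
    field_simp
    rw [smul_eq_mul, div_mul_cancel₀ _ hj]
  have hrange : LinearMap.range φ = ⊤ := LinearMap.range_eq_top.mpr hsurj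
  have hker : Module.finrank ℂ (LinearMap.ker φ) = 2 := by
    have h1 := LinearMap.finrank_range_add_finrank_ker φ
    rw [hrange, finrank_top, Module.finrank_self, Module.finrank_fin_fun] at h1
    omega
  have hle : Submodule.span ℂ (Set.range ![d, w]) ≤ LinearMap.ker φ := by
    rw [Submodule.span_le]
    rintro z ⟨i, rfl⟩
    fin_cases i
    · show c ⬝ᵥ d = 0
      rw [dotProduct_comm, hcdef, dot_self_cross]
    · show c ⬝ᵥ w = 0
      rw [dotProduct_comm, hcdef, dot_cross_self]
  have hspan : Submodule.span ℂ (Set.range ![d, w]) = LinearMap.ker φ := by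
    apply Submodule.eq_of_le_of_finrank_eq hle
    rw [hker, finrank_span_eq_card hli]
    simp
  have hymem : y ∈ LinearMap.ker φ := by
    show c ⬝ᵥ y = 0
    exact hy
  rw [← hspan, Submodule.mem_span_range_iff_exists_fun] at hymem
  obtain ⟨g, hg⟩ := hymem
  exact ⟨g 0, g 1, by rw [← hg]; simp [Fin.sum_univ_two]⟩

/-- An irreducible surface `V = Z(f) ⊂ ℂ³` which is a cone has at most one
apex, unless it is a plane. -/
theorem stmt_12 (f : MvPolynomial (Fin 3) ℂ) (hf : Irreducible f)
    (hdeg : 0 < f.totalDegree)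
    (V : Set (Fin 3 → ℂ)) (hV : V = {p | eval p f = 0})
    (a b : Fin 3 → ℂ) (ha : a ∈ V) (hb : b ∈ V)
    (hconeA : ∀ p ∈ V, ∀ t : ℂ, (a + t • (p - a)) ∈ V)
    (hconeB : ∀ p ∈ V, ∀ t : ℂ, (b + t • (p - b)) ∈ V) :
    a = b ∨ ∃ c : Fin 3 → ℂ, c ≠ 0 ∧ ∃ e : ℂ,
      V = {p | (∑ i, c i * p i) + e = 0} := by
  by_cases hab : a = b
  · exact Or.inl hab
  right
  have hfprime : Prime f := UniqueFactorizationMonoid.irreducible_iff_prime.mp hf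
  have hfa : eval a f = 0 := by rw [hV] at ha; exact ha
  set d : Fin 3 → ℂ := b - a with hd
  have hdne : d ≠ 0 := sub_ne_zero.mpr (Ne.symm hab)
  -- basic translation step
  have hstep : ∀ p ∈ V, ∀ s : ℂ, s ≠ 0 → p + (1 - s⁻¹) • d ∈ V := by
    intro p hp s hs
    have h2 := hconeB _ (hconeA p hp s) s⁻¹
    have heq : b + s⁻¹ • (a + s • (p - a) - b) = p + (1 - s⁻¹) • d := by
      funext i
      simp only [hd, Pi.add_apply, Pi.smul_apply, Pi.sub_apply, smul_eq_mul]
      field_simp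
      ring
    rwa [heq] at h2
  have key : ∀ q ∈ V, ∀ u : ℂ, u ≠ 1 → q + u • d ∈ V := by
    intro q hq u hu
    have hs : ((1 - u)⁻¹ : ℂ) ≠ 0 := inv_ne_zero (sub_ne_zero.mpr fun h => hu h.symm)
    have := hstep q hq _ hs
    rwa [inv_inv, show (1 : ℂ) - (1 - u) = u by ring] at this
  have htrans : ∀ p ∈ V, ∀ t : ℂ, p + t • d ∈ V := by
    intro p hp t
    obtain ⟨u, hu1, hu2⟩ : ∃ u : ℂ, u ≠ 1 ∧ t - u ≠ 1 := by
      by_cases h2 : t = 2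
      · exact ⟨3, by norm_num, by rw [h2]; norm_num⟩
      · refine ⟨t / 2, fun h => h2 ?_, fun h => h2 ?_⟩
        · field_simp at h; linear_combination h
        · rw [show t - t / 2 = t / 2 by ring] at h
          field_simp at h; linear_combination h
    have h1 := key p hp u hu1
    have h2 := key _ h1 (t - u) hu2
    rwa [show p + u • d + (t - u) • d = p + t • d by module] at h2
  have hconeA' : ∀ s : ℂ, ∀ q ∈ V, ∀ t : ℂ, (a + t • (q - a)) + (s * (1 - t)) • d ∈ V :=
    fun s q hq t => htrans _ (hconeA q hq t) _
  -- the finisher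
  have finish : ∀ (c : Fin 3 → ℂ), c ≠ 0 → ∀ e : ℂ,
      (∀ x, eval x f = 0 ↔ eval x (lin c e) = 0) →
      ∃ c : Fin 3 → ℂ, c ≠ 0 ∧ ∃ e : ℂ, V = {p | (∑ i, c i * p i) + e = 0} := by
    intro c hc e hiff
    refine ⟨c, hc, e, ?_⟩
    rw [hV]
    ext x
    simp only [Set.mem_setOf_eq]
    rw [hiff x, eval_lin]
  -- key fact used in both cases: a point in the affine plane a + span{d, w} lies in V,
  -- provided w = p0 - a for p0 ∈ V
  have hplanepoint : ∀ p0 ∈ V, ∀ α β : ℂ, a + (α • d + β • (p0 - a)) ∈ V := by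
    intro p0 hp0 α β
    by_cases hβ : β = 1
    · subst hβ
      have := htrans p0 hp0 α
      rwa [show p0 + α • d = a + (α • d + (1 : ℂ) • (p0 - a)) by module] at this
    · have h1β : (1 : ℂ) - β ≠ 0 := sub_ne_zero.mpr fun h => hβ h.symm
      have := hconeA' (α / (1 - β)) p0 hp0 β
      rw [div_mul_cancel₀ _ h1β] at this
      rwa [show a + β • (p0 - a) + α • d = a + (α • d + β • (p0 - a)) by module] at this
  by_cases hline : ∀ p ∈ V, ∃ t : ℂ, p - a = t • d
  · -- degenerate case: V contained in the line a + ℂ d, take any plane containing it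
    obtain ⟨j, hj⟩ : ∃ j, d j ≠ 0 := Function.ne_iff.mp hdne
    set k : Fin 3 := if j = 0 then 1 else 0 with hk
    have hkj : k ≠ j := by
      rcases eq_or_ne j 0 with h | h <;> simp [hk, h] <;> omega
    set w : Fin 3 → ℂ := Pi.single k 1 with hw
    have hli : LinearIndependent ℂ ![d, w] := by
      rw [LinearIndependent.pair_iff]
      intro s t hst
      have h1 : s = 0 := by
        have := congrFun hst j
        simp only [Pi.add_apply, Pi.smul_apply, Pi.zero_apply, smul_eq_mul, hw,
          Pi.single_apply, if_neg (Ne.symm hkj)] at this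
        rw [mul_zero, add_zero] at this
        exact (mul_eq_zero.mp this).resolve_right hj
      have h2 : t = 0 := by
        have := congrFun hst k
        simp [h1, hw, Pi.single_apply] at this
        exact this
      exact ⟨h1, h2⟩
    set c : Fin 3 → ℂ := crossProduct d w with hc
    have hcne : c ≠ 0 := crossProduct_ne_zero_iff_linearIndependent.mpr hli
    have hcd : ∑ i, c i * d i = 0 := by
      have h := dot_self_cross d w
      rw [show (∑ i, c i * d i) = dotProduct c d from rfl, dotProduct_comm]
      exact h
    refine finish c hcne (-∑ i, c i * a i) fun x => ⟨fun hx => ?_, fun hx => ?_⟩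
    · -- x ∈ V ⊆ plane
      obtain ⟨t, ht⟩ := hline x (by rw [hV]; exact hx)
      rw [eval_lin]
      have : ∑ i, c i * x i - ∑ i, c i * a i = t * ∑ i, c i * d i := by
        rw [← Finset.sum_sub_distrib, Finset.mul_sum]
        refine Finset.sum_congr rfl fun i _ => ?_
        have := congrFun ht i
        simp only [Pi.sub_apply, Pi.smul_apply, smul_eq_mul] at this
        ring_nf
        linear_combination c i * this
      rw [hcd, mul_zero] at this
      linear_combination this
    · -- f ∣ lin, both vanish on same set
      have hdvd : f ∣ lin c (-∑ i, c i * a i) := by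
        apply dvd_of_zero_imp hfprime
        intro y hy
        obtain ⟨t, ht⟩ := hline y (by rw [hV]; exact hy)
        rw [eval_lin]
        have : ∑ i, c i * y i - ∑ i, c i * a i = t * ∑ i, c i * d i := by
          rw [← Finset.sum_sub_distrib, Finset.mul_sum]
          refine Finset.sum_congr rfl fun i _ => ?_
          have := congrFun ht i
          simp only [Pi.sub_apply, Pi.smul_apply, smul_eq_mul] at this
          ring_nf
          linear_combination c i * this
        rw [hcd, mul_zero] at this
        linear_combination this
      obtain ⟨g, hg⟩ := hdvd
      rcases (prime_lin hcne (-∑ i, c i * a i)).irreducible.isUnit_or_isUnit hg with hu | hu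
      · exact absurd hfa ((hu.map (eval a)).ne_zero)
      · have hgx : eval x g ≠ 0 := (hu.map (eval x)).ne_zero
        have := congrArg (eval x) hg
        rw [map_mul, hx] at this
        rcases mul_eq_zero.mp this.symm with h | h
        · exact h
        · exact absurd h hgx
  · -- main case: plane ⊆ V
    push_neg at hline
    obtain ⟨p0, hp0, hp0'⟩ := hline
    set w : Fin 3 → ℂ := p0 - a with hw
    have hli : LinearIndependent ℂ ![d, w] := by
      rw [LinearIndependent.pair_iff]
      intro s t hst
      by_cases ht : t = 0
      · subst ht
        refine ⟨?_, rfl⟩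
        rw [zero_smul, add_zero] at hst
        exact (smul_eq_zero.mp hst).resolve_right hdne
      · exfalso
        apply hp0' (-s / t)
        funext i
        have := congrFun hst i
        simp only [Pi.add_apply, Pi.smul_apply, Pi.zero_apply, smul_eq_mul, hw,
          Pi.sub_apply] at this ⊢
        rw [div_mul_eq_mul_div, eq_div_iff ht]
        linear_combination this
    set c : Fin 3 → ℂ := crossProduct d w with hc
    have hcne : c ≠ 0 := crossProduct_ne_zero_iff_linearIndependent.mpr hli
    have hsub : ∀ x, eval x (lin c (-∑ i, c i * a i)) = 0 → eval x f = 0 := by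
      intro x hx
      rw [eval_lin] at hx
      have hx' : ∑ i, c i * ((x - a) i) = 0 := by
        have hsplit : ∑ i, c i * ((x - a) i) = ∑ i, c i * x i - ∑ i, c i * a i := by
          rw [← Finset.sum_sub_distrib]
          exact Finset.sum_congr rfl fun i _ => by simp [Pi.sub_apply]; ring
        rw [hsplit]
        linear_combination hx
      obtain ⟨α, β, hαβ⟩ := mem_span_of_dot_eq_zero hli hx'
      have hxV : x ∈ V := by
        have := hplanepoint p0 hp0 α β
        rwa [show a + (α • d + β • (p0 - a)) = x by rw [← hw, ← hαβ]; module] at this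
      rw [hV] at hxV
      exact hxV
    have hdvd : lin c (-∑ i, c i * a i) ∣ f :=
      dvd_of_zero_imp (prime_lin hcne _) hsub
    obtain ⟨g, hg⟩ := hdvd
    rcases hf.isUnit_or_isUnit hg with hu | hu
    · exact absurd hu (prime_lin hcne _).not_unit
    · refine finish c hcne (-∑ i, c i * a i) fun x => ⟨fun hx => ?_, fun hx => ?_⟩
      · have hgx : eval x g ≠ 0 := (hu.map (eval x)).ne_zero
        have := congrArg (eval x) hg
        rw [map_mul, hx] at this
        rcases mul_eq_zero.mp this.symm with h | h
        · exact h
        · exact absurd h hgx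
      · have := congrArg (eval x) hg
        rw [map_mul, hx, zero_mul] at this
        exact this
end
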